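/- Let P be a group of errors, 𝒞 a recursive [[n,k,s,m]] morphism, and E = (M, L₁, S₁, …, L_N, S_N) an input to 𝒞_N with every S_i ∈ Z^s and trace (b₀, …, b_{w_L}). Then for every i ∈ {0, …, w_L−1}, if b_i = 0 then b_{i+1} = 1. -/

import Mathlib

open scoped BigOperators

namespace Turbo

variable {P : Type} [Group P]

/-- Weight of an error: the number of non-identity coordinates. -/
noncomputable def wt {n : ℕ} (E : Fin n → P) : ℕ := {i | E i ≠ 1}.ncard

/-- Pad a finite sequence of blocks to an infinite one by identity blocks. -/
def pad {β : Type} [One β] {N : ℕ} (x : Fin N → β) : ℕ → β :=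
  fun i => if h : i < N then x ⟨i, h⟩ else 1

/-- All blocks of a stabilizer sequence have coordinates in `Z`. -/
def ZValued (Z : Subgroup P) {s : ℕ} (S : ℕ → Fin s → P) : Prop := ∀ i j, S i j ∈ Z

/-- Intermediate memory error `M_i` of a convolutional morphism built from the seed `F`. -/
def convMem {m k s n : ℕ}
    (F : ((Fin m → P) × (Fin k → P) × (Fin s → P)) → ((Fin n → P) × (Fin m → P)))
    (M : Fin m → P) (L : ℕ → Fin k → P) (S : ℕ → Fin s → P) : ℕ → Fin m → P
  | 0 => M
  | i + 1 => (F (convMem F M L S i, L i, S i)).2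

/-- The `i`-th physical output block `P_{i+1}` of the convolutional morphism. -/
def convOut {m k s n : ℕ}
    (F : ((Fin m → P) × (Fin k → P) × (Fin s → P)) → ((Fin n → P) × (Fin m → P)))
    (M : Fin m → P) (L : ℕ → Fin k → P) (S : ℕ → Fin s → P) (i : ℕ) : Fin n → P :=
  (F (convMem F M L S i, L i, S i)).1

/-- Weight of the physical output `π_N` (first `N` physical blocks). -/
noncomputable def outWt {m k s n : ℕ}
    (F : ((Fin m → P) × (Fin k → P) × (Fin s → P)) → ((Fin n → P) × (Fin m → P)))
    (M : Fin m → P) (L : ℕ → Fin k → P) (S : ℕ → Fin s → P) (N : ℕ) : ℕ :=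
  ∑ i ∈ Finset.range N, wt (convOut F M L S i)

/-- Weight of the full output `𝒞_N(E) = (P_1, …, P_N, M_N)`. -/
noncomputable def fullWt {m k s n : ℕ}
    (F : ((Fin m → P) × (Fin k → P) × (Fin s → P)) → ((Fin n → P) × (Fin m → P)))
    (M : Fin m → P) (L : ℕ → Fin k → P) (S : ℕ → Fin s → P) (N : ℕ) : ℕ :=
  outWt F M L S N + wt (convMem F M L S N)

/-- The output `𝒞_∞(E)` of the infinite convolutional morphism has infinite weight. -/
def InfOutput {m k s n : ℕ}
    (F : ((Fin m → P) × (Fin k → P) × (Fin s → P)) → ((Fin n → P) × (Fin m → P)))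
    (M : Fin m → P) (L : ℕ → Fin k → P) (S : ℕ → Fin s → P) : Prop :=
  {i : ℕ | convOut F M L S i ≠ 1}.Infinite

/-- The information part of an infinite input has exactly one non-identity letter. -/
def OneInfoLetter {k : ℕ} (L : ℕ → Fin k → P) : Prop :=
  ∃! p : ℕ × Fin k, L p.1 p.2 ≠ 1

/-- A recursive `[[n,k,s,m]]` morphism. -/
def Recursive {m k s n : ℕ} (Z : Subgroup P)
    (F : ((Fin m → P) × (Fin k → P) × (Fin s → P)) → ((Fin n → P) × (Fin m → P))) : Prop :=
  ∀ (L : ℕ → Fin k → P) (S : ℕ → Fin s → P),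
    OneInfoLetter L → ZValued Z S → InfOutput F 1 L S

/-- A systematic morphism: the output weight dominates the information weight. -/
def Systematic {m k s n : ℕ}
    (F : ((Fin m → P) × (Fin k → P) × (Fin s → P)) → ((Fin n → P) × (Fin m → P))) : Prop :=
  ∀ (N : ℕ) (M : Fin m → P) (L : ℕ → Fin k → P) (S : ℕ → Fin s → P),
    (∑ i ∈ Finset.range N, wt (L i)) ≤ fullWt F M L S N

/-- The set `M₁` of memory errors giving an infinite output on trivial information input. -/
def M1 {m k s n : ℕ} (Z : Subgroup P)
    (F : ((Fin m → P) × (Fin k → P) × (Fin s → P)) → ((Fin n → P) × (Fin m → P))) :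
    Set (Fin m → P) :=
  {M | ∀ S : ℕ → Fin s → P, ZValued Z S → InfOutput F M 1 S}

/-- The set of candidate speeds of a morphism. -/
def speedSet {m k s n : ℕ} (Z : Subgroup P)
    (F : ((Fin m → P) × (Fin k → P) × (Fin s → P)) → ((Fin n → P) × (Fin m → P))) : Set ℕ :=
  {η | 0 < η ∧ ∀ M ∈ M1 Z F, ∀ S : ℕ → Fin s → P, ZValued Z S → 1 ≤ outWt F M 1 S η}

/-- `η` is the speed of the morphism `F`. -/
def IsSpeed {m k s n : ℕ} (Z : Subgroup P)
    (F : ((Fin m → P) × (Fin k → P) × (Fin s → P)) → ((Fin n → P) × (Fin m → P)))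
    (η : ℕ) : Prop :=
  IsLeast (speedSet Z F) η

/-- The set `𝕀` of memory errors accessible from the identity memory with trivial
information and `Z`-valued stabilizers. -/
def Iset {m k s n : ℕ} (Z : Subgroup P)
    (F : ((Fin m → P) × (Fin k → P) × (Fin s → P)) → ((Fin n → P) × (Fin m → P))) :
    Set (Fin m → P) :=
  {M | ∃ (N : ℕ) (S : ℕ → Fin s → P), ZValued Z S ∧ M = convMem F 1 1 S N}

/- ### Block `[[n,k]]` encoders -/

/-- `E` is undetected for the `[[n,k]]` encoder `C`. -/
def Undetected {k n : ℕ} (Z : Subgroup P)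
    (C : ((Fin k → P) × (Fin (n - k) → P)) ≃* (Fin n → P)) (E : Fin n → P) : Prop :=
  E ≠ 1 ∧ ∀ j, (C.symm E).2 j ∈ Z

/-- `E` is harmful for the `[[n,k]]` encoder `C`. -/
def Harmful {k n : ℕ} (Z : Subgroup P)
    (C : ((Fin k → P) × (Fin (n - k) → P)) ≃* (Fin n → P)) (E : Fin n → P) : Prop :=
  Undetected Z C E ∧ (C.symm E).1 ≠ 1

/-- The distance `d_c` of an `[[n,k]]` encoder. -/
noncomputable def encDist {k n : ℕ} (Z : Subgroup P)
    (C : ((Fin k → P) × (Fin (n - k) → P)) ≃* (Fin n → P)) : ℕ :=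
  sInf {w | ∃ E, Harmful Z C E ∧ wt E = w}

/-- The degenerate distance `d_q` of an `[[n,k]]` encoder. -/
noncomputable def encDegenDist {k n : ℕ} (Z : Subgroup P)
    (C : ((Fin k → P) × (Fin (n - k) → P)) ≃* (Fin n → P)) : ℕ :=
  sInf {w | ∃ E, Undetected Z C E ∧ wt E = w}

/-- Weight distribution `a^{⊗N}(d)` of the blockwise encoder `C^{⊗N}`. -/
noncomputable def aTensor {k n : ℕ} (Z : Subgroup P)
    (C : ((Fin k → P) × (Fin (n - k) → P)) ≃* (Fin n → P)) (N d : ℕ) : ℕ :=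
  Set.ncard {E : (Fin N → Fin k → P) × (Fin N → Fin (n - k) → P) |
    (∀ i j, E.2 i j ∈ Z) ∧ E.1 ≠ 1 ∧ (∑ i, wt (C (E.1 i, E.2 i))) = d}

/- ### `[[n,k,m]]` encoders and their truncated decoders -/

/-- The truncated decoder `C̄` of an `[[n,k,m]]` encoder `C`, as a `[[k,n,0,m]]` morphism. -/
def truncDecoder {m k n : ℕ}
    (C : ((Fin m → P) × (Fin k → P) × (Fin (n - k) → P)) ≃* ((Fin n → P) × (Fin m → P))) :
    ((Fin m → P) × (Fin n → P) × (Fin 0 → P)) → ((Fin k → P) × (Fin m → P)) :=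
  fun x => ((C.symm (x.2.1, x.1)).2.1, (C.symm (x.2.1, x.1)).1)

/-- Weight distribution `a_N(w, d)` of a convolutional morphism. -/
noncomputable def aN {m k s n : ℕ} (Z : Subgroup P)
    (F : ((Fin m → P) × (Fin k → P) × (Fin s → P)) → ((Fin n → P) × (Fin m → P)))
    (N w d : ℕ) : ℕ :=
  Set.ncard {ML : (Fin m → P) × (Fin N → Fin k → P) |
    (wt ML.1 + ∑ i, wt (ML.2 i)) = w ∧
    ∃ S : Fin N → Fin s → P, (∀ i j, S i j ∈ Z) ∧
      fullWt F ML.1 (pad ML.2) (pad S) N = d}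

/-- Weight distribution `a_N(w, ≤ d)` of a convolutional morphism. -/
noncomputable def aNle {m k s n : ℕ} (Z : Subgroup P)
    (F : ((Fin m → P) × (Fin k → P) × (Fin s → P)) → ((Fin n → P) × (Fin m → P)))
    (N w : ℕ) (d : ℝ) : ℕ :=
  Set.ncard {ML : (Fin m → P) × (Fin N → Fin k → P) |
    (wt ML.1 + ∑ i, wt (ML.2 i)) = w ∧
    ∃ S : Fin N → Fin s → P, (∀ i j, S i j ∈ Z) ∧
      (fullWt F ML.1 (pad ML.2) (pad S) N : ℝ) ≤ d}

/- ### Traces and detours -/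

/-- Replace every information letter at (1-indexed flattened) position `> p` by the identity. -/
def truncAfter {k : ℕ} (L : ℕ → Fin k → P) (p : ℕ) : ℕ → Fin k → P :=
  fun i j => if i * k + (j : ℕ) + 1 ≤ p then L i j else 1

/-- `q` is the (1-indexed flattened) position of a non-identity information letter of the
first `N` information blocks. -/
def IsInfoPos {k : ℕ} (N : ℕ) (L : ℕ → Fin k → P) (q : ℕ) : Prop :=
  ∃ (i : ℕ) (j : Fin k), i < N ∧ q = i * k + (j : ℕ) + 1 ∧ L i j ≠ 1

/-- The information part of the `i`-th truncature `E_{∖i}`. -/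
def truncInfo {k : ℕ} (L : ℕ → Fin k → P) (p : ℕ → ℕ) : ℕ → (ℕ → Fin k → P)
  | 0 => 1
  | i + 1 => truncAfter L (p i)

/-- The number `N_i` of blocks making up the `i`-th truncature (with `N_0 = 0`):
the block containing the position `p i`. -/
def cutOf (k : ℕ) (p : ℕ → ℕ) : ℕ → ℕ
  | 0 => 0
  | i + 1 => (p i - 1) / k + 1

/-- Extend a stabilizer sequence: the first `cut` blocks come from `S`, the rest from `St`. -/
def extendS {s : ℕ} (S : ℕ → Fin s → P) (cut : ℕ) (St : ℕ → Fin s → P) : ℕ → Fin s → P :=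
  fun j => if j < cut then S j else St (j - cut)

/-- The intermediate memory error `M_i` attached to the `i`-th truncature `E_{∖i}`. -/
def traceMem {m k s n : ℕ}
    (F : ((Fin m → P) × (Fin k → P) × (Fin s → P)) → ((Fin n → P) × (Fin m → P)))
    (M : Fin m → P) (L : ℕ → Fin k → P) (S : ℕ → Fin s → P) (p : ℕ → ℕ) : ℕ → Fin m → P
  | 0 => M
  | i + 1 => convMem F M (truncAfter L (p i)) S ((p i - 1) / k + 1)

/-- Paper-indexed positions: `pp p 0 = 0` and `pp p j = p (j-1)` for `j ≥ 1`. -/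
def pp (p : ℕ → ℕ) : ℕ → ℕ
  | 0 => 0
  | j + 1 => p j

/-- The segment `[a, c)` of the trace `b` is a terminating detour: a nonempty run of `1`'s
followed by a single final `0`. -/
def IsTermDetour (b : ℕ → Prop) (a c : ℕ) : Prop :=
  a + 1 < c ∧ (∀ t, a ≤ t → t + 1 < c → b t) ∧ ¬ b (c - 1)

/-- The segment `[a, c)` of the trace `b` is a detour: a nonempty run of `1`'s, possibly
completed with a single final `0`. -/
def IsDetour (b : ℕ → Prop) (a c : ℕ) : Prop :=
  (a < c ∧ ∀ t, a ≤ t → t < c → b t) ∨ IsTermDetour b a c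

end Turbo

namespace TurboAux
open Turbo

variable {P : Type} [Group P] {m k s n : ℕ}

lemma convMem_mul (𝒞 : ((Fin m → P) × (Fin k → P) × (Fin s → P)) →* ((Fin n → P) × (Fin m → P)))
    (M M' : Fin m → P) (L L' : ℕ → Fin k → P) (S S' : ℕ → Fin s → P) (t : ℕ) :
    convMem ⇑𝒞 (M * M') (L * L') (S * S') t
      = convMem ⇑𝒞 M L S t * convMem ⇑𝒞 M' L' S' t := by
  induction t with
  | zero => rfl
  | succ t ih =>
      show (𝒞 (convMem ⇑𝒞 (M * M') (L * L') (S * S') t, (L * L') t, (S * S') t)).2 = _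
      rw [ih]
      have h : ((convMem ⇑𝒞 M L S t * convMem ⇑𝒞 M' L' S' t, (L * L') t, (S * S') t) :
          (Fin m → P) × (Fin k → P) × (Fin s → P))
          = (convMem ⇑𝒞 M L S t, L t, S t) * (convMem ⇑𝒞 M' L' S' t, L' t, S' t) := rfl
      rw [h, map_mul]
      rfl

lemma convMem_inv (𝒞 : ((Fin m → P) × (Fin k → P) × (Fin s → P)) →* ((Fin n → P) × (Fin m → P)))
    (M : Fin m → P) (L : ℕ → Fin k → P) (S : ℕ → Fin s → P) (t : ℕ) :
    convMem ⇑𝒞 M⁻¹ L⁻¹ S⁻¹ t = (convMem ⇑𝒞 M L S t)⁻¹ := by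
  induction t with
  | zero => rfl
  | succ t ih =>
      show (𝒞 (convMem ⇑𝒞 M⁻¹ L⁻¹ S⁻¹ t, L⁻¹ t, S⁻¹ t)).2 = _
      rw [ih]
      have h : (((convMem ⇑𝒞 M L S t)⁻¹, L⁻¹ t, S⁻¹ t) :
          (Fin m → P) × (Fin k → P) × (Fin s → P))
          = ((convMem ⇑𝒞 M L S t, L t, S t))⁻¹ := rfl
      rw [h, map_inv]
      rfl

lemma convOut_mul (𝒞 : ((Fin m → P) × (Fin k → P) × (Fin s → P)) →* ((Fin n → P) × (Fin m → P)))
    (M M' : Fin m → P) (L L' : ℕ → Fin k → P) (S S' : ℕ → Fin s → P) (t : ℕ) :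
    convOut ⇑𝒞 (M * M') (L * L') (S * S') t
      = convOut ⇑𝒞 M L S t * convOut ⇑𝒞 M' L' S' t := by
  unfold convOut
  rw [convMem_mul]
  have h : ((convMem ⇑𝒞 M L S t * convMem ⇑𝒞 M' L' S' t, (L * L') t, (S * S') t) :
      (Fin m → P) × (Fin k → P) × (Fin s → P))
      = (convMem ⇑𝒞 M L S t, L t, S t) * (convMem ⇑𝒞 M' L' S' t, L' t, S' t) := rfl
  rw [h, map_mul]
  rfl

lemma convOut_inv (𝒞 : ((Fin m → P) × (Fin k → P) × (Fin s → P)) →* ((Fin n → P) × (Fin m → P)))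
    (M : Fin m → P) (L : ℕ → Fin k → P) (S : ℕ → Fin s → P) (t : ℕ) :
    convOut ⇑𝒞 M⁻¹ L⁻¹ S⁻¹ t = (convOut ⇑𝒞 M L S t)⁻¹ := by
  unfold convOut
  rw [convMem_inv]
  have h : (((convMem ⇑𝒞 M L S t)⁻¹, L⁻¹ t, S⁻¹ t) :
      (Fin m → P) × (Fin k → P) × (Fin s → P))
      = ((convMem ⇑𝒞 M L S t, L t, S t))⁻¹ := rfl
  rw [h, map_inv]
  rfl

lemma convMem_congr (F : ((Fin m → P) × (Fin k → P) × (Fin s → P)) → ((Fin n → P) × (Fin m → P)))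
    (M : Fin m → P) (L L' : ℕ → Fin k → P) (S S' : ℕ → Fin s → P) (t : ℕ)
    (hL : ∀ u, u < t → L u = L' u) (hS : ∀ u, u < t → S u = S' u) :
    convMem F M L S t = convMem F M L' S' t := by
  induction t with
  | zero => rfl
  | succ t ih =>
      show (F (convMem F M L S t, L t, S t)).2 = (F (convMem F M L' S' t, L' t, S' t)).2
      rw [ih (fun u hu => hL u (by omega)) (fun u hu => hS u (by omega)),
        hL t (by omega), hS t (by omega)]

lemma convMem_add (F : ((Fin m → P) × (Fin k → P) × (Fin s → P)) → ((Fin n → P) × (Fin m → P)))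
    (M : Fin m → P) (L : ℕ → Fin k → P) (S : ℕ → Fin s → P) (N t : ℕ) :
    convMem F M L S (N + t)
      = convMem F (convMem F M L S N) (fun a => L (N + a)) (fun a => S (N + a)) t := by
  induction t with
  | zero => rfl
  | succ t ih =>
      rw [Nat.add_succ]
      show (F (convMem F M L S (N + t), L (N + t), S (N + t))).2 = _
      rw [ih]
      rfl

lemma convOut_add (F : ((Fin m → P) × (Fin k → P) × (Fin s → P)) → ((Fin n → P) × (Fin m → P)))
    (M : Fin m → P) (L : ℕ → Fin k → P) (S : ℕ → Fin s → P) (N t : ℕ) :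
    convOut F M L S (N + t)
      = convOut F (convMem F M L S N) (fun a => L (N + a)) (fun a => S (N + a)) t := by
  unfold convOut
  rw [convMem_add]

lemma pos_ge {k : ℕ} (hk : 0 < k) {q a : ℕ} (h : (q - 1) / k + 1 ≤ a) (j : ℕ) :
    q ≤ a * k + j := by
  have h1 : k * ((q - 1) / k) + (q - 1) % k = q - 1 := Nat.div_add_mod _ _
  have h2 : (q - 1) % k < k := Nat.mod_lt _ hk
  have h3 : ((q - 1) / k + 1) * k ≤ a * k := Nat.mul_le_mul_right k h
  have h4 : ((q - 1) / k + 1) * k = k * ((q - 1) / k) + k := by ring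
  omega

lemma pos_inj {k a a0 j j0 : ℕ} (hj : j < k) (hj0 : j0 < k)
    (h : a * k + j = a0 * k + j0) : a = a0 ∧ j = j0 := by
  have hk : 0 < k := lt_of_le_of_lt (Nat.zero_le _) hj
  have h1 : a = (a * k + j) / k := by
    rw [mul_comm, Nat.mul_add_div hk, Nat.div_eq_of_lt hj, add_zero]
  have h2 : a0 = (a0 * k + j0) / k := by
    rw [mul_comm, Nat.mul_add_div hk, Nat.div_eq_of_lt hj0, add_zero]
  have ha : a = a0 := by rw [h1, h2, h]
  subst ha
  exact ⟨rfl, Nat.add_left_cancel h⟩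

/-- The key lemma: if two information sequences (supported on their respective cut lengths)
differ by exactly one letter, and the memory of the shorter truncature is not in `M1`,
then the memory of the longer one is in `M1`. -/
lemma mem_M1_of_not_mem (Z : Subgroup P)
    (𝒞 : ((Fin m → P) × (Fin k → P) × (Fin s → P)) →* ((Fin n → P) × (Fin m → P)))
    (hrec : Recursive Z ⇑𝒞)
    (M : Fin m → P) (LA LB : ℕ → Fin k → P) (S : ℕ → Fin s → P) (hSZ : ZValued Z S)
    (NA NB : ℕ)
    (hLA : ∀ a, NA ≤ a → LA a = 1)
    (hLB : ∀ a, NB ≤ a → LB a = 1)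
    (hone : OneInfoLetter (LB * LA⁻¹))
    (hMA : convMem ⇑𝒞 M LA S NA ∉ M1 Z ⇑𝒞) :
    convMem ⇑𝒞 M LB S NB ∈ M1 Z ⇑𝒞 := by
  simp only [M1, Set.mem_setOf_eq] at hMA ⊢
  push_neg at hMA
  obtain ⟨T, hTZ, hTfin⟩ := hMA
  intro T' hT'
  by_contra hfin
  simp only [InfOutput, Set.not_infinite] at hfin hTfin
  set SX : ℕ → Fin s → P := extendS S NB T' with hSX
  set SY : ℕ → Fin s → P := extendS S NA T with hSY
  have hSXZ : ZValued Z SX := by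
    intro a j
    by_cases h : a < NB <;> simp [hSX, extendS, h] <;> [exact hSZ a j; exact hT' _ j]
  have hSYZ : ZValued Z SY := by
    intro a j
    by_cases h : a < NA <;> simp [hSY, extendS, h] <;> [exact hSZ a j; exact hTZ _ j]
  -- finiteness of the two extended outputs
  have keyX : ∀ u, convOut ⇑𝒞 M LB SX (NB + u)
      = convOut ⇑𝒞 (convMem ⇑𝒞 M LB S NB) 1 T' u := by
    intro u
    rw [convOut_add]
    have e1 : convMem ⇑𝒞 M LB SX NB = convMem ⇑𝒞 M LB S NB :=
      convMem_congr _ _ _ _ _ _ _ (fun u hu => rfl)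
        (fun u hu => by simp [hSX, extendS, hu])
    have e2 : (fun a => LB (NB + a)) = (1 : ℕ → Fin k → P) :=
      funext fun a => hLB _ (Nat.le_add_right _ _)
    have e3 : (fun a => SX (NB + a)) = T' := by
      funext a
      simp [hSX, extendS]
    rw [e1, e2, e3]
  have keyY : ∀ u, convOut ⇑𝒞 M LA SY (NA + u)
      = convOut ⇑𝒞 (convMem ⇑𝒞 M LA S NA) 1 T u := by
    intro u
    rw [convOut_add]
    have e1 : convMem ⇑𝒞 M LA SY NA = convMem ⇑𝒞 M LA S NA :=
      convMem_congr _ _ _ _ _ _ _ (fun u hu => rfl)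
        (fun u hu => by simp [hSY, extendS, hu])
    have e2 : (fun a => LA (NA + a)) = (1 : ℕ → Fin k → P) :=
      funext fun a => hLA _ (Nat.le_add_right _ _)
    have e3 : (fun a => SY (NA + a)) = T := by
      funext a
      simp [hSY, extendS]
    rw [e1, e2, e3]
  have hXfin : {t | convOut ⇑𝒞 M LB SX t ≠ 1}.Finite := by
    apply Set.Finite.subset ((Set.finite_Iio NB).union (hfin.image (NB + ·)))
    intro t ht
    rcases Nat.lt_or_ge t NB with h | h
    · exact Or.inl h
    · have he : NB + (t - NB) = t := by omega
      refine Or.inr ⟨t - NB, ?_, he⟩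
      simp only [Set.mem_setOf_eq]
      rw [← keyX, he]
      exact ht
  have hYfin : {t | convOut ⇑𝒞 M LA SY t ≠ 1}.Finite := by
    apply Set.Finite.subset ((Set.finite_Iio NA).union (hTfin.image (NA + ·)))
    intro t ht
    rcases Nat.lt_or_ge t NA with h | h
    · exact Or.inl h
    · have he : NA + (t - NA) = t := by omega
      refine Or.inr ⟨t - NA, ?_, he⟩
      simp only [Set.mem_setOf_eq]
      rw [← keyY, he]
      exact ht
  -- recursiveness applied to the quotient input
  have hZq : ZValued Z (SX * SY⁻¹) := fun a j =>
    mul_mem (hSXZ a j) (inv_mem (hSYZ a j))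
  have hinf : InfOutput ⇑𝒞 1 (LB * LA⁻¹) (SX * SY⁻¹) := hrec _ _ hone hZq
  have hquot : ∀ t, convOut ⇑𝒞 1 (LB * LA⁻¹) (SX * SY⁻¹) t
      = convOut ⇑𝒞 M LB SX t * (convOut ⇑𝒞 M LA SY t)⁻¹ := by
    intro t
    have h1 : (1 : Fin m → P) = M * M⁻¹ := (mul_inv_cancel M).symm
    rw [h1, convOut_mul, convOut_inv]
  have hsub : {t : ℕ | convOut ⇑𝒞 1 (LB * LA⁻¹) (SX * SY⁻¹) t ≠ 1}
      ⊆ {t | convOut ⇑𝒞 M LB SX t ≠ 1} ∪ {t | convOut ⇑𝒞 M LA SY t ≠ 1} := by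
    intro t ht
    by_contra h
    simp only [Set.mem_union, Set.mem_setOf_eq, not_or, not_not] at h
    apply ht
    rw [hquot, h.1, h.2]
    simp
  exact hinf (Set.Finite.subset (hXfin.union hYfin) hsub)

end TurboAux

open TurboAux

open Turbo in
/-- In the trace of an input to a recursive convolutional morphism, a `0` is always
followed by a `1`. -/
theorem trace_zero_one {P : Type} [Group P] [Finite P] (Z : Subgroup P) (hZ : Z ≠ ⊤)
    {m k s n : ℕ}
    (𝒞 : ((Fin m → P) × (Fin k → P) × (Fin s → P)) →* ((Fin n → P) × (Fin m → P)))
    (hrec : Recursive Z ⇑𝒞)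
    (N : ℕ) (M : Fin m → P) (L : Fin N → Fin k → P) (S : Fin N → Fin s → P)
    (hS : ∀ i j, S i j ∈ Z)
    (wL : ℕ) (p : ℕ → ℕ)
    (hmono : ∀ i j, i < j → j < wL → p i < p j)
    (hrange : ∀ q, IsInfoPos N (pad L) q ↔ ∃ i < wL, p i = q) :
    ∀ i, i < wL →
      traceMem ⇑𝒞 M (pad L) (pad S) p i ∉ M1 Z ⇑𝒞 →
      traceMem ⇑𝒞 M (pad L) (pad S) p (i + 1) ∈ M1 Z ⇑𝒞 := by
  intro i hi hMi
  obtain ⟨a0, j0, ha0N, hpi, hL0⟩ := (hrange (p i)).2 ⟨i, hi, rfl⟩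
  have hk : 0 < k := j0.pos
  have htr : ∀ t, traceMem ⇑𝒞 M (pad L) (pad S) p t
      = convMem ⇑𝒞 M (truncAfter (pad L) (pp p t)) (pad S) (cutOf k p t) := by
    intro t
    cases t with
    | zero => rfl
    | succ t => rfl
  rw [htr] at hMi ⊢
  have hppi : pp p i < p i := by
    cases i with
    | zero =>
        show 0 < p 0
        omega
    | succ t => exact hmono t (t + 1) (Nat.lt_succ_self t) hi
  have hbetween : ∀ q, IsInfoPos N (pad L) q → pp p i < q → q ≤ p i → q = p i := by
    intro q hq hgt hle
    obtain ⟨i'', hi'', hq''⟩ := (hrange q).1 hq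
    rcases lt_trichotomy i'' i with hlt | rfl | hgt'
    · exfalso
      cases i with
      | zero => omega
      | succ t =>
          have hle' : p i'' ≤ p t := by
            rcases Nat.lt_or_ge i'' t with h | h
            · exact (hmono i'' t h (by omega)).le
            · have : i'' = t := by omega
              subst this
              exact le_rfl
          have hppt : pp p (t + 1) = p t := rfl
          omega
    · exact hq''.symm
    · exfalso
      have := hmono i i'' hgt' hi''
      omega
  have hSZpad : ZValued Z (pad S) := by
    intro a j
    by_cases h : a < N <;> simp [pad, h, hS]
  have hLA : ∀ a, cutOf k p i ≤ a → truncAfter (pad L) (pp p i) a = 1 := by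
    intro a ha
    funext j
    cases i with
    | zero =>
        show (if a * k + (j : ℕ) + 1 ≤ 0 then pad L a j else 1) = 1
        rw [if_neg (by omega)]
    | succ t =>
        show (if a * k + (j : ℕ) + 1 ≤ p t then pad L a j else 1) = 1
        have := pos_ge hk (show (p t - 1) / k + 1 ≤ a from ha) (j : ℕ)
        rw [if_neg (by omega)]
  have hLB : ∀ a, cutOf k p (i + 1) ≤ a → truncAfter (pad L) (pp p (i + 1)) a = 1 := by
    intro a ha
    funext j
    show (if a * k + (j : ℕ) + 1 ≤ p i then pad L a j else 1) = 1
    have := pos_ge hk (show (p i - 1) / k + 1 ≤ a from ha) (j : ℕ)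
    rw [if_neg (by omega)]
  have hone : OneInfoLetter (truncAfter (pad L) (pp p (i + 1)) * (truncAfter (pad L) (pp p i))⁻¹) := by
    have hval : ∀ (a : ℕ) (j : Fin k),
        (truncAfter (pad L) (pp p (i + 1)) * (truncAfter (pad L) (pp p i))⁻¹) a j
          = (if a * k + (j : ℕ) + 1 ≤ p i then pad L a j else 1)
            * (if a * k + (j : ℕ) + 1 ≤ pp p i then pad L a j else 1)⁻¹ := by
      intro a j
      rfl
    refine ⟨(a0, j0), ?_, ?_⟩
    · show (truncAfter (pad L) (pp p (i + 1)) * (truncAfter (pad L) (pp p i))⁻¹) a0 j0 ≠ 1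
      rw [hval, if_pos (by omega), if_neg (by omega)]
      simpa using hL0
    · rintro ⟨a, j⟩ hne
      simp only at hne
      rw [hval] at hne
      by_cases hc1 : a * k + (j : ℕ) + 1 ≤ pp p i
      · exfalso
        rw [if_pos hc1, if_pos (by omega)] at hne
        exact hne (mul_inv_cancel _)
      · by_cases hc2 : a * k + (j : ℕ) + 1 ≤ p i
        · rw [if_pos hc2, if_neg hc1] at hne
          have hne' : pad L a j ≠ 1 := by simpa using hne
          have haN : a < N := by
            by_contra h
            exact hne' (by simp [pad, h])
          have hq : a * k + (j : ℕ) + 1 = p i :=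
            hbetween _ ⟨a, j, haN, rfl, hne'⟩ (by omega) hc2
          have := pos_inj j.isLt j0.isLt (show a * k + (j : ℕ) = a0 * k + (j0 : ℕ) by omega)
          rw [Prod.mk.injEq]
          exact ⟨this.1, Fin.ext this.2⟩
        · exfalso
          rw [if_neg hc2, if_neg hc1] at hne
          exact hne (by simp)
  exact mem_M1_of_not_mem Z 𝒞 hrec M _ _ _ hSZpad _ _ hLA hLB hone hMi
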